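/- For real square matrices, if A(n) and B(n) are symmetric matrices with ‖A(n) − B(n)‖_op = O(n^{−2}), then lim_{n→∞} ‖A(n)‖_op^n exists if lim_{n→∞} ‖B(n)‖_op^n does and the limits coincide. In particular, for fixed symmetric M and matrix D, lim_{n→∞} ‖e^{−M/n}(I − D/n)‖_op^n = ‖e^{−(M+D)}‖_op whenever M + D is symmetric. -/

import Mathlib

open Matrix Filter Topology Nat

/-- The Euclidean operator norm of a real matrix. -/
noncomputable def opNorm {V : Type*} [Fintype V] [DecidableEq V] (A : Matrix V V ℝ) : ℝ :=
  ‖LinearMap.toContinuousLinearMap (Matrix.toEuclideanLin A)‖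

/-- The matrix exponential. -/
noncomputable def mexp {V : Type*} [Fintype V] [DecidableEq V] (A : Matrix V V ℝ) :
    Matrix V V ℝ :=
  NormedSpace.exp A


-- remainder bound for exp
lemma exp_remainder {𝔸 : Type*} [NormedRing 𝔸] [NormedAlgebra ℝ 𝔸] [CompleteSpace 𝔸] (x : 𝔸) :
    ‖NormedSpace.exp x - 1 - x‖ ≤ ‖x‖ ^ 2 * Real.exp ‖x‖ := by
  have h : HasSum (fun n : ℕ => ((n ! : ℝ))⁻¹ • x ^ n) (NormedSpace.exp x) :=
    NormedSpace.exp_series_hasSum_exp' (𝕂 := ℝ) x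
  set f : ℕ → 𝔸 := fun n => ((n ! : ℝ))⁻¹ • x ^ n with hf
  have h2 : HasSum (fun n => f (n + 2)) (NormedSpace.exp x - ∑ i ∈ Finset.range 2, f i) :=
    (hasSum_nat_add_iff' 2).mpr h
  have hsum2 : ∑ i ∈ Finset.range 2, f i = 1 + x := by
    simp [hf, Finset.sum_range_succ, Nat.factorial]
  have heq : NormedSpace.exp x - 1 - x = ∑' n, f (n + 2) := by
    rw [h2.tsum_eq, hsum2, sub_sub]
  have hns : Summable (fun n => ‖f (n + 2)‖) := by
    have := NormedSpace.norm_expSeries_summable' (𝕂 := ℝ) x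
    exact (summable_nat_add_iff 2).mpr this
  have hbound : ∀ n : ℕ, ‖f (n + 2)‖ ≤ ‖x‖ ^ 2 * ((n ! : ℝ)⁻¹ * ‖x‖ ^ n) := by
    intro n
    have h1 : ‖f (n + 2)‖ = ((n + 2)! : ℝ)⁻¹ * ‖x ^ (n + 2)‖ := by
      simp [hf, norm_smul, abs_of_nonneg, Real.norm_eq_abs]
    rw [h1]
    have h2 : ‖x ^ (n + 2)‖ ≤ ‖x‖ ^ (n + 2) := norm_pow_le' x (by omega)
    have h3 : ((n + 2)! : ℝ)⁻¹ ≤ (n ! : ℝ)⁻¹ := by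
      apply inv_anti₀
      · exact_mod_cast Nat.factorial_pos n
      · exact_mod_cast Nat.factorial_le (by omega)
    calc ((n + 2)! : ℝ)⁻¹ * ‖x ^ (n + 2)‖ ≤ (n ! : ℝ)⁻¹ * ‖x‖ ^ (n + 2) := by
          apply mul_le_mul h3 h2 (norm_nonneg _) (by positivity)
      _ = ‖x‖ ^ 2 * ((n ! : ℝ)⁻¹ * ‖x‖ ^ n) := by rw [pow_add]; ring
  have hrs : Summable (fun n : ℕ => ‖x‖ ^ 2 * ((n ! : ℝ)⁻¹ * ‖x‖ ^ n)) := by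
    apply Summable.mul_left
    have := Real.summable_pow_div_factorial ‖x‖
    simpa [div_eq_mul_inv, mul_comm] using this
  have hexp : ∑' n : ℕ, ((n ! : ℝ)⁻¹ * ‖x‖ ^ n) = Real.exp ‖x‖ := by
    rw [Real.exp_eq_exp_ℝ, NormedSpace.exp_eq_tsum ℝ]
    simp [smul_eq_mul]
  calc ‖NormedSpace.exp x - 1 - x‖ = ‖∑' n, f (n + 2)‖ := by rw [heq]
    _ ≤ ∑' n, ‖f (n + 2)‖ := norm_tsum_le_tsum_norm hns
    _ ≤ ∑' n : ℕ, ‖x‖ ^ 2 * ((n ! : ℝ)⁻¹ * ‖x‖ ^ n) := Summable.tsum_le_tsum hbound hns hrs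
    _ = ‖x‖ ^ 2 * Real.exp ‖x‖ := by rw [tsum_mul_left, hexp]


lemma sa_norm_pow {E : Type*} [NormedRing E] [StarRing E] [CStarRing E] {x : E}
    (hx : IsSelfAdjoint x) {n : ℕ} (hn : 1 ≤ n) : ‖x ^ n‖ = ‖x‖ ^ n := by
  refine le_antisymm (norm_pow_le' x (by omega)) ?_
  rcases eq_or_lt_of_le (norm_nonneg x) with h0 | h0
  · have hx0 : x = 0 := norm_eq_zero.mp h0.symm
    simp [hx0, zero_pow (by omega : n ≠ 0), ← h0]
  · have hkey : ‖x ^ (2 ^ n)‖ = ‖x‖ ^ (2 ^ n) := by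
      have h := congrArg NNReal.toReal (hx.nnnorm_pow_two_pow n)
      simpa [coe_nnnorm, NNReal.coe_pow] using h
    have hle : 0 < 2 ^ n - n := by have := Nat.lt_two_pow_self (n := n); omega
    have hsplit : x ^ (2 ^ n) = x ^ n * x ^ (2 ^ n - n) := by
      rw [← pow_add]; congr 1; omega
    have h1 : ‖x‖ ^ (2 ^ n) ≤ ‖x ^ n‖ * ‖x‖ ^ (2 ^ n - n) := by
      calc ‖x‖ ^ (2 ^ n) = ‖x ^ (2 ^ n)‖ := hkey.symm
        _ = ‖x ^ n * x ^ (2 ^ n - n)‖ := by rw [hsplit]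
        _ ≤ ‖x ^ n‖ * ‖x ^ (2 ^ n - n)‖ := norm_mul_le _ _
        _ ≤ ‖x ^ n‖ * ‖x‖ ^ (2 ^ n - n) :=
            mul_le_mul_of_nonneg_left (norm_pow_le' x hle) (norm_nonneg _)
    have h2 : ‖x‖ ^ n * ‖x‖ ^ (2 ^ n - n) ≤ ‖x ^ n‖ * ‖x‖ ^ (2 ^ n - n) := by
      rw [← pow_add]
      calc ‖x‖ ^ (n + (2 ^ n - n)) = ‖x‖ ^ (2 ^ n) := by congr 1; omega
        _ ≤ ‖x ^ n‖ * ‖x‖ ^ (2 ^ n - n) := h1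
    exact le_of_mul_le_mul_right h2 (pow_pos h0 _)

lemma pow_sub_pow_le' {x y : ℝ} (hx : 0 ≤ x) (hxy : x ≤ y) (n : ℕ) :
    y ^ n - x ^ n ≤ n * y ^ (n - 1) * (y - x) := by
  induction n with
  | zero => simp
  | succ n ih =>
    have hy : 0 ≤ y := le_trans hx hxy
    have hxn : x ^ n ≤ y ^ n := pow_le_pow_left₀ hx hxy n
    have key : y ^ (n + 1) - x ^ (n + 1) = y * (y ^ n - x ^ n) + (y - x) * x ^ n := by ring
    rcases Nat.eq_zero_or_pos n with h | h
    · subst h; simp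
    · have hmul : y * (y ^ n - x ^ n) ≤ y * (n * y ^ (n - 1) * (y - x)) :=
        mul_le_mul_of_nonneg_left ih hy
      have hyp : y * (↑n * y ^ (n - 1) * (y - x)) = ↑n * y ^ n * (y - x) := by
        rw [show y ^ n = y * y ^ (n - 1) by rw [← _root_.pow_succ']; congr 1; omega]
        ring
      have hx' : (y - x) * x ^ n ≤ (y - x) * y ^ n :=
        mul_le_mul_of_nonneg_left hxn (by linarith)
      have : y ^ (n + 1) - x ^ (n + 1) ≤ ↑n * y ^ n * (y - x) + (y - x) * y ^ n := by
        rw [key, ← hyp]; linarith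
      calc y ^ (n + 1) - x ^ (n + 1) ≤ ↑n * y ^ n * (y - x) + (y - x) * y ^ n := this
        _ = (↑(n + 1) : ℝ) * y ^ (n + 1 - 1) * (y - x) := by push_cast; ring_nf


lemma abs_pow_sub_pow_le' {a b : ℝ} (ha : 0 ≤ a) (hb : 0 ≤ b) (n : ℕ) :
    |a ^ n - b ^ n| ≤ n * (max a b) ^ (n - 1) * |a - b| := by
  rcases le_total a b with h | h
  · rw [abs_sub_comm, abs_of_nonneg (sub_nonneg.mpr (pow_le_pow_left₀ ha h n)),
      abs_sub_comm a b, abs_of_nonneg (sub_nonneg.mpr h), max_eq_right h]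
    exact pow_sub_pow_le' ha h n
  · rw [abs_of_nonneg (sub_nonneg.mpr (pow_le_pow_left₀ hb h n)),
      abs_of_nonneg (sub_nonneg.mpr h), max_eq_left h]
    exact pow_sub_pow_le' hb h n

lemma scalar_lim (a b : ℕ → ℝ) (ha : ∀ n, 0 ≤ a n) (hb : ∀ n, 0 ≤ b n) (c : ℝ)
    (hc : ∀ n : ℕ, 1 ≤ n → |a n - b n| ≤ c / (n : ℝ) ^ 2) (L : ℝ)
    (hL : Tendsto (fun n : ℕ => b n ^ n) atTop (𝓝 L)) :
    Tendsto (fun n : ℕ => a n ^ n) atTop (𝓝 L) := by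
  have hc0 : 0 ≤ c := le_trans (abs_nonneg _) (by simpa using hc 1 le_rfl)
  have hL0 : 0 ≤ L :=
    le_of_tendsto_of_tendsto' tendsto_const_nhds hL (fun n => pow_nonneg (hb n) n)
  set K : ℝ := 1 + (L + 2) * Real.exp c with hK
  have hK0 : 0 ≤ K := by positivity
  have hdiff : Tendsto (fun n : ℕ => a n ^ n - b n ^ n) atTop (𝓝 0) := by
    apply squeeze_zero_norm' (a := fun n : ℕ => K * c / n)
    · have hev : ∀ᶠ n : ℕ in atTop, b n ^ n ≤ L + 1 :=
        hL.eventually (eventually_le_nhds (by linarith))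
      filter_upwards [hev, eventually_ge_atTop 1] with n hbn hn
      have hn0 : (0 : ℝ) < n := by exact_mod_cast hn
      have hn1 : (1 : ℝ) ≤ n := by exact_mod_cast hn
      set m : ℝ := max (a n) (b n) with hm
      have hm0 : 0 ≤ m := le_trans (ha n) (le_max_left _ _)
      -- m ≤ b n + c / n^2
      have hmle : m ≤ b n + c / n ^ 2 := by
        apply max_le _ (le_add_of_nonneg_right (by positivity))
        have := hc n hn
        have := abs_le.mp this
        linarith [this.1]
      -- (1 + c/n^2)^n ≤ exp c
      have hgeom : (1 + c / n ^ 2) ^ n ≤ Real.exp c := by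
        have h1 : 1 + c / n ^ 2 ≤ Real.exp (c / n ^ 2) := by
          have := Real.add_one_le_exp (c / n ^ 2); linarith
        calc (1 + c / n ^ 2) ^ n ≤ Real.exp (c / n ^ 2) ^ n :=
              pow_le_pow_left₀ (by positivity) h1 n
          _ = Real.exp (n * (c / n ^ 2)) := (Real.exp_nat_mul _ n).symm
          _ ≤ Real.exp c := by
              apply Real.exp_le_exp.mpr
              rw [show (n : ℝ) * (c / n ^ 2) = c / n by field_simp]
              exact div_le_self hc0 hn1
      -- m ^ n ≤ (L + 2) * exp c
      have hmn : m ^ n ≤ (L + 2) * Real.exp c := by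
        rcases le_total (b n) 1 with hb1 | hb1
        · have : m ≤ 1 + c / n ^ 2 := le_trans hmle (by linarith)
          calc m ^ n ≤ (1 + c / n ^ 2) ^ n := pow_le_pow_left₀ hm0 this n
            _ ≤ Real.exp c := hgeom
            _ ≤ (L + 2) * Real.exp c := by nlinarith [Real.exp_pos c]
        · have hmb : m ≤ b n * (1 + c / n ^ 2) := by
            have : c / n ^ 2 ≤ b n * (c / n ^ 2) := by nlinarith [div_nonneg hc0 (by positivity : (0:ℝ) ≤ (n:ℝ)^2)]
            nlinarith [hmle]
          calc m ^ n ≤ (b n * (1 + c / n ^ 2)) ^ n := pow_le_pow_left₀ hm0 hmb n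
            _ = b n ^ n * (1 + c / n ^ 2) ^ n := mul_pow _ _ n
            _ ≤ (L + 1) * Real.exp c := by
                apply mul_le_mul hbn hgeom (by positivity) (by linarith)
            _ ≤ (L + 2) * Real.exp c := by nlinarith [Real.exp_pos c]
      -- m ^ (n-1) ≤ K
      have hmn1 : m ^ (n - 1) ≤ K := by
        rcases le_total m 1 with hm1 | hm1
        · calc m ^ (n - 1) ≤ 1 := pow_le_one₀ hm0 hm1
            _ ≤ K := by nlinarith [Real.exp_pos c]
        · calc m ^ (n - 1) ≤ m ^ n := pow_le_pow_right₀ hm1 (by omega)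
            _ ≤ (L + 2) * Real.exp c := hmn
            _ ≤ K := by linarith
      have hfinal : |a n ^ n - b n ^ n| ≤ K * c / n := by
        calc |a n ^ n - b n ^ n| ≤ n * m ^ (n - 1) * |a n - b n| :=
              abs_pow_sub_pow_le' (ha n) (hb n) n
          _ ≤ n * K * (c / n ^ 2) := by
              apply mul_le_mul (mul_le_mul_of_nonneg_left hmn1 (by positivity))
                (hc n hn) (abs_nonneg _) (by positivity)
          _ = K * c / n := by field_simp
      simpa [Real.norm_eq_abs] using hfinal
    · have : Tendsto (fun n : ℕ => (K * c) / (n : ℝ)) atTop (𝓝 0) :=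
        tendsto_const_div_atTop_nhds_zero_nat (K * c)
      simpa using this
  have := hdiff.add hL
  simpa using this


lemma key_est {𝔸 : Type*} [NormedRing 𝔸] [NormedAlgebra ℝ 𝔸] [CompleteSpace 𝔸]
    (hone : ‖(1 : 𝔸)‖ ≤ 1) (M D : 𝔸) {t : ℝ} (ht0 : 0 ≤ t) (ht1 : t ≤ 1) :
    ‖NormedSpace.exp (-(t • M)) * (1 - t • D) - NormedSpace.exp (-(t • (M + D)))‖ ≤
      (‖M‖ * ‖D‖ + ‖M‖ ^ 2 * Real.exp ‖M‖ * (1 + ‖D‖) + ‖M + D‖ ^ 2 * Real.exp ‖M + D‖) * t ^ 2 := by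
  set E1 := NormedSpace.exp (-(t • M)) with hE1
  set E2 := NormedSpace.exp (-(t • (M + D))) with hE2
  have hid : E1 * (1 - t • D) - E2 =
      (t ^ 2) • (M * D) + (E1 - 1 + t • M) * (1 - t • D) - (E2 - 1 + t • (M + D)) := by
    simp only [sub_mul, add_mul, mul_sub, mul_one, one_mul, smul_mul_assoc, mul_smul_comm,
      smul_smul, smul_add]
    module
  have hR1 : ‖E1 - 1 + t • M‖ ≤ t ^ 2 * ‖M‖ ^ 2 * Real.exp ‖M‖ := by
    have h := exp_remainder (-(t • M))
    have hx : ‖-(t • M)‖ = t * ‖M‖ := by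
      rw [norm_neg, norm_smul, Real.norm_eq_abs, abs_of_nonneg ht0]
    have heq : NormedSpace.exp (-(t • M)) - 1 - -(t • M) = E1 - 1 + t • M := by
      rw [← hE1]; abel
    rw [heq, hx] at h
    calc ‖E1 - 1 + t • M‖ ≤ (t * ‖M‖) ^ 2 * Real.exp (t * ‖M‖) := h
      _ ≤ t ^ 2 * ‖M‖ ^ 2 * Real.exp ‖M‖ := by
          rw [mul_pow]
          apply mul_le_mul_of_nonneg_left _ (by positivity)
          exact Real.exp_le_exp.mpr (by nlinarith [norm_nonneg M])
  have hR2 : ‖E2 - 1 + t • (M + D)‖ ≤ t ^ 2 * ‖M + D‖ ^ 2 * Real.exp ‖M + D‖ := by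
    have h := exp_remainder (-(t • (M + D)))
    have hx : ‖-(t • (M + D))‖ = t * ‖M + D‖ := by
      rw [norm_neg, norm_smul, Real.norm_eq_abs, abs_of_nonneg ht0]
    have heq : NormedSpace.exp (-(t • (M + D))) - 1 - -(t • (M + D)) =
        E2 - 1 + t • (M + D) := by rw [← hE2]; abel
    rw [heq, hx] at h
    calc ‖E2 - 1 + t • (M + D)‖ ≤ (t * ‖M + D‖) ^ 2 * Real.exp (t * ‖M + D‖) := h
      _ ≤ t ^ 2 * ‖M + D‖ ^ 2 * Real.exp ‖M + D‖ := by
          rw [mul_pow]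
          apply mul_le_mul_of_nonneg_left _ (by positivity)
          exact Real.exp_le_exp.mpr (by nlinarith [norm_nonneg (M + D)])
  have hfac : ‖(1 : 𝔸) - t • D‖ ≤ 1 + ‖D‖ := by
    calc ‖(1 : 𝔸) - t • D‖ ≤ ‖(1 : 𝔸)‖ + ‖t • D‖ := norm_sub_le _ _
      _ ≤ 1 + ‖D‖ := by
          apply add_le_add hone
          rw [norm_smul, Real.norm_eq_abs, abs_of_nonneg ht0]
          nlinarith [norm_nonneg D]
  have hMD : ‖(t ^ 2) • (M * D)‖ ≤ t ^ 2 * (‖M‖ * ‖D‖) := by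
    rw [norm_smul, Real.norm_eq_abs, abs_of_nonneg (by positivity)]
    exact mul_le_mul_of_nonneg_left (norm_mul_le _ _) (by positivity)
  calc ‖E1 * (1 - t • D) - E2‖
      = ‖(t ^ 2) • (M * D) + (E1 - 1 + t • M) * (1 - t • D) - (E2 - 1 + t • (M + D))‖ := by
        rw [hid]
    _ ≤ ‖(t ^ 2) • (M * D) + (E1 - 1 + t • M) * (1 - t • D)‖ + ‖E2 - 1 + t • (M + D)‖ :=
        norm_sub_le _ _
    _ ≤ ‖(t ^ 2) • (M * D)‖ + ‖(E1 - 1 + t • M) * (1 - t • D)‖ + ‖E2 - 1 + t • (M + D)‖ := by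
        have := norm_add_le ((t ^ 2) • (M * D)) ((E1 - 1 + t • M) * (1 - t • D))
        linarith
    _ ≤ t ^ 2 * (‖M‖ * ‖D‖) + (t ^ 2 * ‖M‖ ^ 2 * Real.exp ‖M‖) * (1 + ‖D‖) +
        t ^ 2 * ‖M + D‖ ^ 2 * Real.exp ‖M + D‖ := by
        have h2 : ‖(E1 - 1 + t • M) * (1 - t • D)‖ ≤
            (t ^ 2 * ‖M‖ ^ 2 * Real.exp ‖M‖) * (1 + ‖D‖) := by
          calc ‖(E1 - 1 + t • M) * (1 - t • D)‖ ≤ ‖E1 - 1 + t • M‖ * ‖(1 : 𝔸) - t • D‖ :=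
                norm_mul_le _ _
            _ ≤ (t ^ 2 * ‖M‖ ^ 2 * Real.exp ‖M‖) * (1 + ‖D‖) :=
                mul_le_mul hR1 hfac (norm_nonneg _) (by positivity)
        linarith [hMD, hR2]
    _ = (‖M‖ * ‖D‖ + ‖M‖ ^ 2 * Real.exp ‖M‖ * (1 + ‖D‖) + ‖M + D‖ ^ 2 * Real.exp ‖M + D‖) *
        t ^ 2 := by ring


open scoped Matrix.Norms.L2Operator in
theorem stmt17 {V : Type*} [Fintype V] [DecidableEq V]
    (A B : ℕ → Matrix V V ℝ) (hA : ∀ n, (A n).IsSymm) (hB : ∀ n, (B n).IsSymm)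
    (c : ℝ) (hc : ∀ n : ℕ, 1 ≤ n → opNorm (A n - B n) ≤ c / (n : ℝ) ^ 2) :
    (∀ L : ℝ, Tendsto (fun n : ℕ => opNorm (B n) ^ n) atTop (𝓝 L) →
        Tendsto (fun n : ℕ => opNorm (A n) ^ n) atTop (𝓝 L)) ∧
    (∀ M D : Matrix V V ℝ, M.IsSymm → (M + D).IsSymm →
        Tendsto
          (fun n : ℕ =>
            opNorm (mexp (-((1 / (n : ℝ)) • M)) * (1 - (1 / (n : ℝ)) • D)) ^ n)
          atTop (𝓝 (opNorm (mexp (-(M + D)))))) := by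
  have hop : ∀ (X : Matrix V V ℝ), opNorm X = ‖X‖ := fun _ => rfl
  have hone : ‖(1 : Matrix V V ℝ)‖ ≤ 1 := by
    rw [Matrix.cstar_norm_def, _root_.map_one]
    exact ContinuousLinearMap.norm_id_le
  constructor
  · intro L hL
    simp only [hop] at *
    apply scalar_lim _ _ (fun n => norm_nonneg _) (fun n => norm_nonneg _) c _ L hL
    intro n hn
    exact le_trans (abs_norm_sub_norm_le _ _) (hc n hn)
  · intro M D hM hS
    simp only [hop]
    have hmexp : ∀ X : Matrix V V ℝ, mexp X = NormedSpace.exp X := fun _ => rfl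
    set C : ℝ := ‖M‖ * ‖D‖ + ‖M‖ ^ 2 * Real.exp ‖M‖ * (1 + ‖D‖) +
      ‖M + D‖ ^ 2 * Real.exp ‖M + D‖ with hC
    apply scalar_lim _ (fun n : ℕ => ‖mexp (-((1 / (n : ℝ)) • (M + D)))‖)
      (fun n => norm_nonneg _) (fun n => norm_nonneg _) C
    · -- the O(1/n^2) estimate
      intro n hn
      have hn1 : (1 : ℝ) ≤ n := by exact_mod_cast hn
      have ht0 : (0 : ℝ) ≤ 1 / n := by positivity
      have ht1 : (1 : ℝ) / n ≤ 1 := by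
        rw [div_le_one (by linarith)]; exact hn1
      have := key_est hone M D ht0 ht1
      calc |‖mexp (-((1 / (n : ℝ)) • M)) * (1 - (1 / (n : ℝ)) • D)‖ -
            ‖mexp (-((1 / (n : ℝ)) • (M + D)))‖|
          ≤ ‖mexp (-((1 / (n : ℝ)) • M)) * (1 - (1 / (n : ℝ)) • D) -
            mexp (-((1 / (n : ℝ)) • (M + D)))‖ := abs_norm_sub_norm_le _ _
        _ ≤ C * (1 / (n : ℝ)) ^ 2 := by rw [hmexp, hmexp]; exact this
        _ = C / (n : ℝ) ^ 2 := by field_simp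
    · -- constant sequence
      have hconst : ∀ n : ℕ, 1 ≤ n →
          ‖mexp (-((1 / (n : ℝ)) • (M + D)))‖ ^ n = ‖mexp (-(M + D))‖ := by
        intro n hn
        have hn0 : (n : ℝ) ≠ 0 := by positivity
        set X : Matrix V V ℝ := mexp (-((1 / (n : ℝ)) • (M + D))) with hX
        have hsymm : (-((1 / (n : ℝ)) • (M + D))).IsSymm := by
          unfold Matrix.IsSymm
          rw [Matrix.transpose_neg, Matrix.transpose_smul, hS.eq]
        have hXsymm : X.IsSymm := Matrix.IsSymm.exp hsymm
        have hsa : IsSelfAdjoint X := by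
          show star X = X
          rw [Matrix.star_eq_conjTranspose, Matrix.conjTranspose_eq_transpose_of_trivial]
          exact hXsymm.eq
        have hpow : X ^ n = mexp (-(M + D)) := by
          rw [hX, hmexp, hmexp, ← Matrix.exp_nsmul]
          congr 1
          rw [← Nat.cast_smul_eq_nsmul ℝ, smul_neg, smul_smul]
          congr 2
          field_simp
          exact one_smul _ _
        rw [← sa_norm_pow hsa hn, hpow]
      apply Tendsto.congr' _ tendsto_const_nhds
      filter_upwards [eventually_ge_atTop 1] with n hn
      exact (hconst n hn).symm
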